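/- arXiv:2208.04041 — 7 statements merged into one kernel-verified Lean document; each statement's English description precedes it below -/
import Mathlib

section
/- For any two total orders (permutations) σ and τ over a finite set A, the Spearman distance (the sum over a ∈ A of |pos_σ(a) - pos_τ(a)|) is at least the swap (Kendall tau) distance and at most twice the swap distance. -/
namespace SpearSwap

variable {n : ℕ}

def invSet (π : Fin n ≃ Fin n) : Finset (Fin n × Fin n) :=
  Finset.univ.filter (fun p => p.1 < p.2 ∧ π p.2 < π p.1)

def K (π : Fin n ≃ Fin n) : ℕ := (invSet π).card

def F (π : Fin n ≃ Fin n) : ℕ := ∑ i : Fin n, Nat.dist ((π i : ℕ)) (i : ℕ)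

lemma card_coe_filter (a b : ℕ) (hb : b ≤ n) :
    (Finset.univ.filter fun k : Fin n => a ≤ (k:ℕ) ∧ (k:ℕ) < b).card = b - a := by
  rw [← Nat.card_Ico]
  have himg : (Finset.univ.filter fun k : Fin n => a ≤ (k:ℕ) ∧ (k:ℕ) < b).image
      (fun k : Fin n => (k:ℕ)) = Finset.Ico a b := by
    ext m
    simp only [Finset.mem_image, Finset.mem_filter, Finset.mem_univ, true_and, Finset.mem_Ico]
    constructor
    · rintro ⟨k, hk, rfl⟩; exact hk
    · rintro ⟨h1, h2⟩; exact ⟨⟨m, lt_of_lt_of_le h2 hb⟩, ⟨h1, h2⟩, rfl⟩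
  rw [← himg, Finset.card_image_of_injective _ Fin.val_injective]

lemma nat_dist_eq (x y : ℕ) : Nat.dist x y = max x y - min x y := by
  simp [Nat.dist]; omega

lemma K_le_F (π : Fin n ≃ Fin n) : K π ≤ F π := by
  classical
  have hF : F π = (Finset.univ.sigma (fun i : Fin n =>
      Finset.univ.filter fun k : Fin n =>
        min ((π i : ℕ)) (i:ℕ) ≤ (k:ℕ) ∧ (k:ℕ) < max ((π i : ℕ)) (i:ℕ))).card := by
    rw [Finset.card_sigma]
    refine Finset.sum_congr rfl fun i _ => ?_
    rw [card_coe_filter _ _ (by omega : max ((π i : ℕ)) (i:ℕ) ≤ n), nat_dist_eq]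
  rw [K, hF]
  apply Finset.card_le_card_of_injOn
    (fun p => if (p.1:ℕ) ≤ (π p.2 : ℕ) then (⟨p.1, π p.2⟩ : (_ : Fin n) × Fin n) else ⟨p.2, p.1⟩)
  · intro p hp
    simp only [invSet, Finset.mem_coe, Finset.mem_filter, Finset.mem_univ, true_and] at hp
    obtain ⟨h1, h2⟩ := hp
    have h1' : (p.1:ℕ) < p.2 := h1
    have h2' : (π p.2:ℕ) < π p.1 := h2
    by_cases hc : (p.1:ℕ) ≤ (π p.2 : ℕ) <;>
      simp only [hc, if_true, if_false, if_pos, if_neg, not_le, Finset.mem_coe, Finset.mem_sigma,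
        Finset.mem_univ, Finset.mem_filter, true_and] <;> omega
  · intro p hp q hq heq
    simp only [invSet, Finset.coe_filter, Set.mem_setOf_eq, Finset.mem_univ, true_and] at hp hq
    obtain ⟨hp1, hp2⟩ := hp; obtain ⟨hq1, hq2⟩ := hq
    have hp1' : (p.1:ℕ) < p.2 := hp1
    have hq1' : (q.1:ℕ) < q.2 := hq1
    by_cases hcp : (p.1:ℕ) ≤ (π p.2 : ℕ) <;> by_cases hcq : (q.1:ℕ) ≤ (π q.2 : ℕ) <;>
      simp only [hcp, hcq, if_true, if_false, if_pos, if_neg, not_le,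
        Sigma.ext_iff] at heq <;> obtain ⟨e1, e2⟩ := heq
    · have e2' := eq_of_heq e2
      exact Prod.ext e1 (π.injective e2')
    · -- p case1, q case2 : p.1 = q.2, π p.2 = q.1
      have e2' := eq_of_heq e2
      have : ((q.2 : Fin n) : ℕ) ≤ (q.1 : ℕ) := by
        rw [← e1, ← e2']; exact hcp
      omega
    · have e2' := eq_of_heq e2
      have : ((p.2 : Fin n) : ℕ) ≤ (p.1 : ℕ) := by
        have := hcq; rw [← e1, ← e2'] at this; exact this
      omega
    · have e2' := eq_of_heq e2
      exact Prod.ext e2' e1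

lemma F_eq_zero_of_no_descent (π : Fin n ≃ Fin n)
    (h : ∀ i j : Fin n, (j:ℕ) = (i:ℕ) + 1 → π i ≤ π j) : F π = 0 := by
  have hmono : ∀ i j : Fin n, (j:ℕ) = (i:ℕ) + 1 → (π i : ℕ) < (π j : ℕ) := by
    intro i j hij
    have hne : π i ≠ π j := by
      intro he
      have := π.injective he
      rw [this] at hij
      omega
    have := lt_of_le_of_ne (h i j hij) hne
    exact this
  have hle : ∀ m : ℕ, ∀ hm : m < n, m ≤ (π ⟨m, hm⟩ : ℕ) := by
    intro m
    induction m with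
    | zero => intro hm; exact Nat.zero_le _
    | succ m ihm =>
      intro hm
      have hm' : m < n := by omega
      have h1 := ihm hm'
      have h2 := hmono ⟨m, hm'⟩ ⟨m+1, hm⟩ rfl
      omega
  have hsum : ∑ i : Fin n, ((π i : ℕ)) = ∑ i : Fin n, (i : ℕ) :=
    Equiv.sum_comp π (fun i : Fin n => (i : ℕ))
  have hall : ∀ i : Fin n, (i : ℕ) = (π i : ℕ) := by
    by_contra hc
    push_neg at hc
    obtain ⟨i, hi⟩ := hc
    have hlt : ∑ k : Fin n, ((k : ℕ)) < ∑ k : Fin n, ((π k : ℕ)) := by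
      refine Finset.sum_lt_sum (fun k _ => hle k k.isLt) ⟨i, Finset.mem_univ i, ?_⟩
      exact lt_of_le_of_ne (hle i i.isLt) hi
    omega
  refine Finset.sum_eq_zero fun i _ => ?_
  rw [← hall i, Nat.dist_self]

lemma K_step (π : Fin n ≃ Fin n) (i j : Fin n) (hij : (j:ℕ) = (i:ℕ) + 1) (hd : π j < π i) :
    K ((Equiv.swap i j).trans π) + 1 ≤ K π := by
  classical
  set s := Equiv.swap i j with hs
  have hij_lt : (i:ℕ) < (j:ℕ) := by omega
  have hne : i ≠ j := by intro h; rw [h] at hij_lt; omega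
  have hsi : s i = j := Equiv.swap_apply_left i j
  have hsj : s j = i := Equiv.swap_apply_right i j
  have hmem : (i, j) ∈ invSet π := by
    simp only [invSet, Finset.mem_filter, Finset.mem_univ, true_and]
    exact ⟨Fin.lt_def.2 hij_lt, hd⟩
  have hKpos : 1 ≤ K π := Finset.card_pos.2 ⟨_, hmem⟩
  have hinj : K (s.trans π) ≤ ((invSet π).erase (i, j)).card := by
    apply Finset.card_le_card_of_injOn (fun p => (s p.1, s p.2))
    · intro p hp
      rw [Finset.mem_coe, invSet, Finset.mem_filter] at hp
      simp only [Finset.mem_univ, true_and, Equiv.trans_apply] at hp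
      obtain ⟨hp1, hp2⟩ := hp
      have hp1' : (p.1 : ℕ) < (p.2 : ℕ) := hp1
      rw [Finset.mem_coe, Finset.mem_erase]
      constructor
      · intro he
        rw [Prod.mk.injEq] at he
        have e1 : p.1 = j := by
          have := s.injective (he.1.trans hsj.symm); exact this
        have e2 : p.2 = i := by
          have := s.injective (he.2.trans hsi.symm); exact this
        rw [e1, e2] at hp1'
        omega
      · simp only [invSet, Finset.mem_filter, Finset.mem_univ, true_and]
        refine ⟨?_, hp2⟩
        rw [Fin.lt_def]
        by_cases h1i : p.1 = i
        · by_cases h2j : p.2 = j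
          · exfalso
            rw [h1i, h2j, hsi, hsj] at hp2
            exact absurd hp2 (lt_asymm hd)
          · have h2i : p.2 ≠ i := by
              intro h; rw [h1i, h] at hp1'; omega
            rw [h1i, hsi, Equiv.swap_apply_of_ne_of_ne h2i h2j]
            have : (p.2 : ℕ) ≠ (j : ℕ) := fun h => h2j (Fin.ext h)
            rw [h1i] at hp1'
            omega
        · by_cases h1j : p.1 = j
          · have h2i : p.2 ≠ i := by
              intro h; rw [h1j, h] at hp1'; omega
            have h2j : p.2 ≠ j := by
              intro h; rw [h1j, h] at hp1'; omega
            rw [h1j, hsj, Equiv.swap_apply_of_ne_of_ne h2i h2j]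
            rw [h1j] at hp1'
            omega
          · rw [Equiv.swap_apply_of_ne_of_ne h1i h1j]
            by_cases h2i : p.2 = i
            · rw [h2i, hsi]
              rw [h2i] at hp1'
              omega
            · by_cases h2j : p.2 = j
              · rw [h2j, hsj]
                have : (p.1 : ℕ) ≠ (i : ℕ) := fun h => h1i (Fin.ext h)
                rw [h2j] at hp1'
                omega
              · rw [Equiv.swap_apply_of_ne_of_ne h2i h2j]
                exact hp1'
    · intro p _ q _ he
      rw [Prod.mk.injEq] at he
      exact Prod.ext (s.injective he.1) (s.injective he.2)
  have hcard : ((invSet π).erase (i, j)).card = K π - 1 := Finset.card_erase_of_mem hmem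
  omega

lemma F_step (π : Fin n ≃ Fin n) (i j : Fin n) (hij : (j:ℕ) = (i:ℕ) + 1) :
    F π ≤ F ((Equiv.swap i j).trans π) + 2 := by
  classical
  set s := Equiv.swap i j with hs
  have hne : i ≠ j := by intro h; rw [h] at hij; omega
  have hF1 : F π = ∑ k : Fin n, Nat.dist ((π (s k) : ℕ)) ((s k : ℕ)) := by
    rw [F]
    exact (Equiv.sum_comp s fun k : Fin n => Nat.dist ((π k : ℕ)) ((k : ℕ))).symm
  have htri : ∀ k : Fin n, Nat.dist ((π (s k) : ℕ)) ((s k : ℕ)) ≤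
      Nat.dist ((π (s k) : ℕ)) ((k : ℕ)) + Nat.dist ((k : ℕ)) ((s k : ℕ)) :=
    fun k => Nat.dist.triangle_inequality _ _ _
  have hswapsum : ∑ k : Fin n, Nat.dist ((k : ℕ)) ((s k : ℕ)) = 2 := by
    have hterm : ∀ k : Fin n, Nat.dist ((k : ℕ)) ((s k : ℕ)) =
        (if k = i then 1 else 0) + (if k = j then 1 else 0) := by
      intro k
      by_cases hki : k = i
      · subst hki
        rw [Equiv.swap_apply_left]
        simp [hne, Nat.dist, hij]
      · by_cases hkj : k = j
        · subst hkj
          rw [Equiv.swap_apply_right]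
          simp [Ne.symm hne, hki, Nat.dist, hij]
        · rw [Equiv.swap_apply_of_ne_of_ne hki hkj]
          simp [hki, hkj, Nat.dist_self]
    rw [Finset.sum_congr rfl fun k _ => hterm k, Finset.sum_add_distrib]
    simp
  calc F π = ∑ k : Fin n, Nat.dist ((π (s k) : ℕ)) ((s k : ℕ)) := hF1
    _ ≤ ∑ k : Fin n, (Nat.dist ((π (s k) : ℕ)) ((k : ℕ)) + Nat.dist ((k : ℕ)) ((s k : ℕ))) :=
        Finset.sum_le_sum fun k _ => htri k
    _ = F ((Equiv.swap i j).trans π) + 2 := by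
        rw [Finset.sum_add_distrib, hswapsum]; rfl

lemma F_le_two_K (π : Fin n ≃ Fin n) : F π ≤ 2 * K π := by
  classical
  suffices h : ∀ N : ℕ, ∀ π : Fin n ≃ Fin n, K π ≤ N → F π ≤ 2 * K π from h (K π) π le_rfl
  intro N
  induction N with
  | zero =>
    intro π hK
    have hnd : ∀ i j : Fin n, (j:ℕ) = (i:ℕ) + 1 → π i ≤ π j := by
      intro i j h
      by_contra hlt
      push_neg at hlt
      have hmem : (i, j) ∈ invSet π := by
        simp only [invSet, Finset.mem_filter, Finset.mem_univ, true_and]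
        exact ⟨Fin.lt_def.2 (by omega), hlt⟩
      have := Finset.card_pos.2 ⟨_, hmem⟩
      have : 1 ≤ K π := this
      omega
    rw [F_eq_zero_of_no_descent π hnd]
    exact Nat.zero_le _
  | succ N ih =>
    intro π hK
    by_cases hd : ∃ i j : Fin n, (j:ℕ) = (i:ℕ) + 1 ∧ π j < π i
    · obtain ⟨i, j, hij, hdij⟩ := hd
      have h1 := K_step π i j hij hdij
      have h2 := F_step π i j hij
      have h3 := ih ((Equiv.swap i j).trans π) (by omega)
      omega
    · push_neg at hd
      have hnd : ∀ i j : Fin n, (j:ℕ) = (i:ℕ) + 1 → π i ≤ π j := by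
        intro i j h
        exact hd i j h
      rw [F_eq_zero_of_no_descent π hnd]
      exact Nat.zero_le _

end SpearSwap

/-- For two total orders over a finite set `A` (represented by their rank
functions `σ τ : A ≃ Fin n`), the Spearman distance
`∑ a, |pos_σ(a) - pos_τ(a)|` is at least the swap (Kendall tau) distance
(the number of pairs on whose relative order `σ` and `τ` disagree) and at
most twice the swap distance. -/
theorem spear_between_swap_and_twice_swap
    {A : Type*} [Fintype A] [DecidableEq A] {n : ℕ}
    (σ τ : A ≃ Fin n)
    (swapDist spearDist : ℕ)
    (hswap : swapDist = (Finset.univ.filter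
      (fun p : A × A => σ p.1 < σ p.2 ∧ τ p.2 < τ p.1)).card)
    (hspear : spearDist = ∑ a : A, Nat.dist ((σ a : ℕ)) ((τ a : ℕ))) :
    swapDist ≤ spearDist ∧ spearDist ≤ 2 * swapDist := by
  classical
  set π : Fin n ≃ Fin n := σ.symm.trans τ with hπ
  have hKeq : swapDist = SpearSwap.K π := by
    rw [hswap, SpearSwap.K]
    have hset : (Finset.univ.filter (fun p : A × A => σ p.1 < σ p.2 ∧ τ p.2 < τ p.1)) =
        (SpearSwap.invSet π).map (Equiv.prodCongr σ.symm σ.symm).toEmbedding := by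
      ext p
      rw [Finset.mem_map_equiv]
      simp [SpearSwap.invSet, hπ]
    rw [hset, Finset.card_map]
  have hFeq : spearDist = SpearSwap.F π := by
    rw [hspear, SpearSwap.F]
    rw [← Equiv.sum_comp σ (fun i : Fin n => Nat.dist ((π i : ℕ)) ((i : ℕ)))]
    refine Finset.sum_congr rfl fun a _ => ?_
    simp only [hπ, Equiv.trans_apply, Equiv.symm_apply_apply]
    exact Nat.dist_comm _ _
  rw [hKeq, hFeq]
  exact ⟨SpearSwap.K_le_F π, SpearSwap.F_le_two_K π⟩
end

section
/- For any two SR instances I₁ and I₂ with 2n agents each whose mutual attraction distance is nonzero, their mutual attraction distance is at least 2 and at most 4(n−1)n². -/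
/-- A Stable Roommates instance on `N` agents: each agent `a` has a strict
preference order over the other `N - 1` agents, given as an injective
enumeration `pref a : Fin (N - 1) → Fin N` avoiding `a` itself. -/
structure SRInstance (N : ℕ) where
  pref : Fin N → Fin (N - 1) → Fin N
  inj : ∀ a : Fin N, Function.Injective (pref a)
  ne_self : ∀ (a : Fin N) (i : Fin (N - 1)), pref a i ≠ a

namespace SRInstance

/-- The (1-indexed) position of agent `b` in the preference order of agent `a`. -/
def posOf {N : ℕ} (I : SRInstance N) (a b : Fin N) : ℕ :=
  ∑ j ∈ Finset.univ.filter (fun j : Fin (N - 1) => I.pref a j = b), (j.1 + 1)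

/-- The mutual attraction entry of agent `a` at index `i`: the position of `a`
in the preference order of the agent ranked `i`-th by `a`. -/
def MA {N : ℕ} (I : SRInstance N) (a : Fin N) (i : Fin (N - 1)) : ℕ :=
  I.posOf (I.pref a i) a

variable {N : ℕ}

lemma posOf_pref (I : SRInstance N) (a : Fin N) (i : Fin (N - 1)) :
    I.posOf a (I.pref a i) = i.1 + 1 := by
  have hf : Finset.univ.filter (fun j : Fin (N - 1) => I.pref a j = I.pref a i) = {i} := by
    ext j
    simp [(I.inj a).eq_iff]
  rw [posOf, hf, Finset.sum_singleton]

lemma image_pref (I : SRInstance N) (a : Fin N) :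
    Finset.univ.image (I.pref a) = Finset.univ.erase a := by
  apply Finset.eq_of_subset_of_card_le
  · intro b hb
    obtain ⟨i, _, rfl⟩ := Finset.mem_image.mp hb
    exact Finset.mem_erase.mpr ⟨I.ne_self a i, Finset.mem_univ _⟩
  · rw [Finset.card_erase_of_mem (Finset.mem_univ a),
      Finset.card_image_of_injective _ (I.inj a)]
    simp

lemma sum_pref (I : SRInstance N) (a : Fin N) (g : Fin N → ℕ) :
    ∑ i : Fin (N - 1), g (I.pref a i) = ∑ b ∈ Finset.univ.erase a, g b := by
  rw [← I.image_pref a, Finset.sum_image (fun i _ j _ h => I.inj a h)]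

lemma sum_MA (I : SRInstance N) (f : ℕ → ℕ) :
    ∑ a : Fin N, ∑ i : Fin (N - 1), f (I.MA a i)
      = ∑ a : Fin N, ∑ i : Fin (N - 1), f (i.1 + 1) := by
  calc ∑ a : Fin N, ∑ i : Fin (N - 1), f (I.MA a i)
      = ∑ a : Fin N, ∑ b ∈ Finset.univ.erase a, f (I.posOf b a) :=
        Finset.sum_congr rfl fun a _ => I.sum_pref a fun b => f (I.posOf b a)
    _ = ∑ b : Fin N, ∑ a ∈ Finset.univ.erase b, f (I.posOf b a) := by
        refine Finset.sum_comm' fun x y => ?_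
        simp [eq_comm, ne_comm]
    _ = ∑ b : Fin N, ∑ i : Fin (N - 1), f (I.posOf b (I.pref b i)) :=
        Finset.sum_congr rfl fun b _ => (I.sum_pref b fun a => f (I.posOf b a)).symm
    _ = ∑ b : Fin N, ∑ i : Fin (N - 1), f (i.1 + 1) := by
        simp_rw [posOf_pref]

lemma MA_bounds (I : SRInstance N) (a : Fin N) (i : Fin (N - 1)) :
    1 ≤ I.MA a i ∧ I.MA a i ≤ N - 1 := by
  have h : a ∈ Finset.univ.image (I.pref (I.pref a i)) := by
    rw [image_pref]
    exact Finset.mem_erase.mpr ⟨(I.ne_self a i).symm, Finset.mem_univ _⟩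
  obtain ⟨j, _, hj⟩ := Finset.mem_image.mp h
  have hMA : I.MA a i = j.1 + 1 := by
    have h2 := I.posOf_pref (I.pref a i) j
    rw [hj] at h2
    exact h2
  rw [hMA]
  exact ⟨Nat.le_add_left _ _, j.isLt⟩

end SRInstance

section Aux

lemma dist_mod_two (x y : ℕ) : Nat.dist x y % 2 = (x + y) % 2 := by
  unfold Nat.dist; omega

lemma dist_le_add (x y : ℕ) : Nat.dist x y ≤ x + y := by
  unfold Nat.dist; omega

lemma dist_thresh {K x y : ℕ} (hx1 : 1 ≤ x) (hxK : x ≤ K) (hy1 : 1 ≤ y) (hyK : y ≤ K) :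
    Nat.dist x y
      = ∑ t ∈ Finset.Ico 1 K,
          Nat.dist (if x ≤ t then 1 else 0) (if y ≤ t then 1 else 0) := by
  have hterm : ∀ t, Nat.dist (if x ≤ t then 1 else 0) (if y ≤ t then 1 else 0)
      = if (x ≤ t ∧ t < y) ∨ (y ≤ t ∧ t < x) then 1 else 0 := by
    intro t
    unfold Nat.dist
    split_ifs <;> omega
  rw [Finset.sum_congr rfl fun t _ => hterm t, ← Finset.sum_filter]
  have hfil : (Finset.Ico 1 K).filter (fun t => (x ≤ t ∧ t < y) ∨ (y ≤ t ∧ t < x))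
      = Finset.Ico (min x y) (max x y) := by
    ext t
    simp only [Finset.mem_filter, Finset.mem_Ico]
    omega
  rw [hfil, Finset.sum_const, smul_eq_mul, mul_one, Nat.card_Ico]
  unfold Nat.dist
  omega

lemma dist_ite_le_gt (x y t : ℕ) :
    Nat.dist (if x ≤ t then 1 else 0) (if y ≤ t then 1 else 0)
      ≤ (if t < x then 1 else 0) + (if t < y then 1 else 0) := by
  unfold Nat.dist
  split_ifs <;> omega

lemma sum_range_low (K t : ℕ) (ht : t ≤ K) :
    ∑ j ∈ Finset.range K, (if j + 1 ≤ t then (1 : ℕ) else 0) = t := by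
  have hfil : (Finset.range K).filter (fun j => j + 1 ≤ t) = Finset.range t := by
    ext j; simp only [Finset.mem_filter, Finset.mem_range]; omega
  rw [← Finset.sum_filter, hfil]
  simp

lemma sum_range_gt (K t : ℕ) :
    ∑ j ∈ Finset.range K, (if t < j + 1 then (1 : ℕ) else 0) = K - t := by
  have hfil : (Finset.range K).filter (fun j => t < j + 1) = Finset.Ico t K := by
    ext j; simp only [Finset.mem_filter, Finset.mem_range, Finset.mem_Ico]; omega
  rw [← Finset.sum_filter, hfil]
  simp

lemma lin_helper (P Q G1 G2 m : ℕ) (h1 : G1 * 2 = P) (h2 : G2 * 2 = Q)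
    (h3 : P = Q + 2 * m) : G1 + (G2 + m) = P := by omega

lemma sum_min_eq (n : ℕ) (hn : 1 ≤ n) :
    ∑ t ∈ Finset.Ico 1 (2 * n - 1), (if t < n then t else (2 * n - 1 - t)) = n * (n - 1) := by
  rw [← Finset.sum_Ico_consecutive _ hn (show n ≤ 2 * n - 1 by omega)]
  have h1 : ∑ t ∈ Finset.Ico 1 n, (if t < n then t else (2 * n - 1 - t))
      = ∑ t ∈ Finset.Ico 1 n, t :=
    Finset.sum_congr rfl fun t ht => if_pos (Finset.mem_Ico.mp ht).2
  have h2 : ∑ t ∈ Finset.Ico n (2 * n - 1), (if t < n then t else (2 * n - 1 - t))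
      = ∑ t ∈ Finset.Ico n (2 * n - 1), (2 * n - 1 - t) :=
    Finset.sum_congr rfl fun t ht => if_neg (by
      have := (Finset.mem_Ico.mp ht).1; omega)
  rw [h1, h2]
  have e1 : ∑ t ∈ Finset.Ico 1 n, t = ∑ t ∈ Finset.range n, t := by
    rw [Finset.range_eq_Ico, ← Finset.sum_Ico_consecutive _ (Nat.zero_le 1) hn]
    simp
  have e2 : ∑ t ∈ Finset.Ico n (2 * n - 1), (2 * n - 1 - t)
      = ∑ j ∈ Finset.range (n - 1), (n - 1 - j) := by
    rw [Finset.sum_Ico_eq_sum_range]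
    have hc : 2 * n - 1 - n = n - 1 := by omega
    rw [hc]
    exact Finset.sum_congr rfl fun j _ => by omega
  have e3 : ∑ j ∈ Finset.range (n - 1), (n - 1 - j)
      = ∑ j ∈ Finset.range (n - 1), (j + 1) := by
    rw [← Finset.sum_range_reflect (fun j => j + 1) (n - 1)]
    refine Finset.sum_congr rfl fun j hj => ?_
    have := Finset.mem_range.mp hj
    omega
  rw [e1, e2, e3, Finset.sum_add_distrib, Finset.sum_const, smul_eq_mul, mul_one,
    Finset.card_range]
  refine lin_helper _ ((n - 1) * (n - 1 - 1)) _ _ (n - 1)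
    (Finset.sum_range_id_mul_two n) (Finset.sum_range_id_mul_two (n - 1)) ?_
  rcases n with _ | m
  · omega
  · rcases m with _ | k
    · simp
    · simp only [Nat.succ_sub_one]
      ring

end Aux


/-- The mutual attraction distance between two SR instances on `N` agents:
the minimum over bijections of the agent sets of the summed ℓ1-distances
between matched mutual attraction vectors. -/
noncomputable def distMAD {N : ℕ} (I I' : SRInstance N) : ℕ :=
  sInf { d | ∃ σ : Fin N ≃ Fin N,
    d = ∑ a : Fin N, ∑ i : Fin (N - 1), Nat.dist (I.MA a i) (I'.MA (σ a) i) }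

/-- Any two SR instances on `2n` agents with nonzero mutual attraction
distance are at distance at least `2` and at most `4(n-1)n²`. -/
theorem distMAD_bounds {n : ℕ} (I₁ I₂ : SRInstance (2 * n))
    (h : distMAD I₁ I₂ ≠ 0) :
    2 ≤ distMAD I₁ I₂ ∧ distMAD I₁ I₂ ≤ 4 * (n - 1) * n ^ 2 := by
  have hmem : distMAD I₁ I₂ ∈ { d | ∃ σ : Fin (2 * n) ≃ Fin (2 * n),
      d = ∑ a : Fin (2 * n), ∑ i : Fin (2 * n - 1),
        Nat.dist (I₁.MA a i) (I₂.MA (σ a) i) } :=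
    Nat.sInf_mem ⟨_, Equiv.refl _, rfl⟩
  obtain ⟨σ, hσ⟩ := hmem
  have hn : 0 < n := by
    rcases Nat.eq_zero_or_pos n with rfl | h'
    · refine absurd ?_ h
      rw [hσ]
      apply Finset.sum_eq_zero
      intro a _
      exact absurd a.isLt (by omega)
    · exact h'
  constructor
  · -- lower bound
    have h3 : ∑ a : Fin (2 * n), ∑ i : Fin (2 * n - 1), I₂.MA (σ a) i
        = ∑ a : Fin (2 * n), ∑ i : Fin (2 * n - 1), I₂.MA a i :=
      Equiv.sum_comp σ fun b => ∑ i : Fin (2 * n - 1), I₂.MA b i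
    have h4 : ∑ a : Fin (2 * n), ∑ i : Fin (2 * n - 1), I₁.MA a i
        = ∑ a : Fin (2 * n), ∑ i : Fin (2 * n - 1), I₂.MA a i := by
      have e1 := I₁.sum_MA (fun x => x)
      have e2 := I₂.sum_MA (fun x => x)
      rw [e1, e2]
    have hpar : distMAD I₁ I₂ % 2 = 0 := by
      rw [hσ]
      have step : (∑ a : Fin (2 * n), ∑ i : Fin (2 * n - 1),
            Nat.dist (I₁.MA a i) (I₂.MA (σ a) i)) % 2
          = (∑ a : Fin (2 * n), ∑ i : Fin (2 * n - 1),
            (I₁.MA a i + I₂.MA (σ a) i)) % 2 := by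
        rw [Finset.sum_nat_mod, Finset.sum_nat_mod Finset.univ 2
          (fun a => ∑ i : Fin (2 * n - 1), (I₁.MA a i + I₂.MA (σ a) i))]
        congr 1
        refine Finset.sum_congr rfl fun a _ => ?_
        rw [Finset.sum_nat_mod, Finset.sum_nat_mod Finset.univ 2
          (fun i => I₁.MA a i + I₂.MA (σ a) i)]
        congr 1
        exact Finset.sum_congr rfl fun i _ => dist_mod_two _ _
      rw [step]
      have hsplit : ∑ a : Fin (2 * n), ∑ i : Fin (2 * n - 1),
            (I₁.MA a i + I₂.MA (σ a) i)
          = (∑ a : Fin (2 * n), ∑ i : Fin (2 * n - 1), I₁.MA a i)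
            + ∑ a : Fin (2 * n), ∑ i : Fin (2 * n - 1), I₂.MA (σ a) i := by
        rw [← Finset.sum_add_distrib]
        exact Finset.sum_congr rfl fun a _ => Finset.sum_add_distrib
      rw [hsplit, h3, h4]
      omega
    omega
  · -- upper bound
    have hub : distMAD I₁ I₂ ≤ ∑ a : Fin (2 * n), ∑ i : Fin (2 * n - 1),
        Nat.dist (I₁.MA a i) (I₂.MA a i) :=
      Nat.sInf_le ⟨Equiv.refl _, rfl⟩
    refine hub.trans ?_
    set K := 2 * n - 1 with hK
    have hNK : 2 * n - 1 = K := rfl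
    have hstep1 : ∀ (a : Fin (2 * n)) (i : Fin (2 * n - 1)),
        Nat.dist (I₁.MA a i) (I₂.MA a i)
          = ∑ t ∈ Finset.Ico 1 K,
              Nat.dist (if I₁.MA a i ≤ t then 1 else 0) (if I₂.MA a i ≤ t then 1 else 0) := by
      intro a i
      exact dist_thresh (I₁.MA_bounds a i).1 (I₁.MA_bounds a i).2
        (I₂.MA_bounds a i).1 (I₂.MA_bounds a i).2
    calc ∑ a : Fin (2 * n), ∑ i : Fin (2 * n - 1), Nat.dist (I₁.MA a i) (I₂.MA a i)
        = ∑ a : Fin (2 * n), ∑ i : Fin (2 * n - 1), ∑ t ∈ Finset.Ico 1 K,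
            Nat.dist (if I₁.MA a i ≤ t then 1 else 0) (if I₂.MA a i ≤ t then 1 else 0) :=
          Finset.sum_congr rfl fun a _ => Finset.sum_congr rfl fun i _ => hstep1 a i
      _ = ∑ t ∈ Finset.Ico 1 K, ∑ a : Fin (2 * n), ∑ i : Fin (2 * n - 1),
            Nat.dist (if I₁.MA a i ≤ t then 1 else 0) (if I₂.MA a i ≤ t then 1 else 0) := by
          rw [Finset.sum_congr rfl fun (a : Fin (2 * n)) _ => Finset.sum_comm]
          exact Finset.sum_comm
      _ ≤ ∑ t ∈ Finset.Ico 1 K, (if t < n then 4 * n * t else 4 * n * (K - t)) := by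
          refine Finset.sum_le_sum fun t ht => ?_
          obtain ⟨ht1, ht2⟩ := Finset.mem_Ico.mp ht
          have hcount : ∀ (J : SRInstance (2 * n)) (g : ℕ → ℕ) (c : ℕ),
              (∑ j ∈ Finset.range (2 * n - 1), g (j + 1) = c) →
              ∑ a : Fin (2 * n), ∑ i : Fin (2 * n - 1), g (J.MA a i) = 2 * n * c := by
            intro J g c hc
            rw [J.sum_MA g]
            have : ∀ a : Fin (2 * n), ∑ i : Fin (2 * n - 1), g (i.1 + 1) = c := by
              intro a
              rw [Fin.sum_univ_eq_sum_range (fun j => g (j + 1))]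
              exact hc
            rw [Finset.sum_congr rfl fun a _ => this a, Finset.sum_const,
              smul_eq_mul, Finset.card_univ, Fintype.card_fin]
          by_cases htn : t < n
          · rw [if_pos htn]
            have hb : ∑ a : Fin (2 * n), ∑ i : Fin (2 * n - 1),
                  Nat.dist (if I₁.MA a i ≤ t then 1 else 0) (if I₂.MA a i ≤ t then 1 else 0)
                ≤ ∑ a : Fin (2 * n), ∑ i : Fin (2 * n - 1),
                  ((if I₁.MA a i ≤ t then 1 else 0) + (if I₂.MA a i ≤ t then 1 else 0)) :=
              Finset.sum_le_sum fun a _ => Finset.sum_le_sum fun i _ => dist_le_add _ _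
            refine hb.trans ?_
            have hsplit : ∑ a : Fin (2 * n), ∑ i : Fin (2 * n - 1),
                  ((if I₁.MA a i ≤ t then 1 else 0) + (if I₂.MA a i ≤ t then 1 else 0))
                = (∑ a : Fin (2 * n), ∑ i : Fin (2 * n - 1), (if I₁.MA a i ≤ t then 1 else 0))
                  + ∑ a : Fin (2 * n), ∑ i : Fin (2 * n - 1), (if I₂.MA a i ≤ t then 1 else 0) := by
              rw [← Finset.sum_add_distrib]
              exact Finset.sum_congr rfl fun a _ => Finset.sum_add_distrib
            rw [hsplit,
              hcount I₁ (fun x => if x ≤ t then 1 else 0) t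
                (sum_range_low (2 * n - 1) t (by omega)),
              hcount I₂ (fun x => if x ≤ t then 1 else 0) t
                (sum_range_low (2 * n - 1) t (by omega))]
            exact le_of_eq (by ring)
          · rw [if_neg htn]
            have hb : ∑ a : Fin (2 * n), ∑ i : Fin (2 * n - 1),
                  Nat.dist (if I₁.MA a i ≤ t then 1 else 0) (if I₂.MA a i ≤ t then 1 else 0)
                ≤ ∑ a : Fin (2 * n), ∑ i : Fin (2 * n - 1),
                  ((if t < I₁.MA a i then 1 else 0) + (if t < I₂.MA a i then 1 else 0)) :=
              Finset.sum_le_sum fun a _ => Finset.sum_le_sum fun i _ => dist_ite_le_gt _ _ _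
            refine hb.trans ?_
            have hsplit : ∑ a : Fin (2 * n), ∑ i : Fin (2 * n - 1),
                  ((if t < I₁.MA a i then 1 else 0) + (if t < I₂.MA a i then 1 else 0))
                = (∑ a : Fin (2 * n), ∑ i : Fin (2 * n - 1), (if t < I₁.MA a i then 1 else 0))
                  + ∑ a : Fin (2 * n), ∑ i : Fin (2 * n - 1), (if t < I₂.MA a i then 1 else 0) := by
              rw [← Finset.sum_add_distrib]
              exact Finset.sum_congr rfl fun a _ => Finset.sum_add_distrib
            rw [hsplit,
              hcount I₁ (fun x => if t < x then 1 else 0) (2 * n - 1 - t)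
                (sum_range_gt (2 * n - 1) t),
              hcount I₂ (fun x => if t < x then 1 else 0) (2 * n - 1 - t)
                (sum_range_gt (2 * n - 1) t)]
            have hKt : K - t = 2 * n - 1 - t := by rw [hK]
            rw [hKt]
            exact le_of_eq (by ring)
      _ = 4 * (n - 1) * n ^ 2 := by
          have hfac : ∑ t ∈ Finset.Ico 1 K, (if t < n then 4 * n * t else 4 * n * (K - t))
              = 4 * n * ∑ t ∈ Finset.Ico 1 K, (if t < n then t else (K - t)) := by
            rw [Finset.mul_sum]
            exact Finset.sum_congr rfl fun t _ => by split_ifs <;> ring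
          rw [hfac, hK, sum_min_eq n hn]
          have hm : ∃ m, n = m + 1 := ⟨n - 1, by omega⟩
          obtain ⟨m, rfl⟩ := hm
          simp only [Nat.add_sub_cancel]
          ring
end

section
/- There exist two non-isomorphic SR instances on 4 agents whose mutual attraction matrices coincide up to row permutation; hence the mutual attraction distance is not an isomorphic distance (distance zero does not imply isomorphism). -/
/-- Two SR instances on `N` agents are isomorphic if a renaming `σ` of the
agents transforms one into the other. -/
def SRIsomorphic {N : ℕ} (I I' : SRInstance N) : Prop :=
  ∃ σ : Fin N ≃ Fin N, ∀ (a : Fin N) (i : Fin (N - 1)),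
    I'.pref (σ a) i = σ (I.pref a i)

def Iex : SRInstance 4 where
  pref := ![![1,2,3],![0,2,3],![0,3,1],![0,1,2]]
  inj := by decide
  ne_self := by decide

def Iex' : SRInstance 4 where
  pref := ![![1,2,3],![0,3,2],![0,1,3],![0,2,1]]
  inj := by decide
  ne_self := by decide

/-- There exist two non-isomorphic SR instances on 4 agents at mutual
attraction distance zero; hence the mutual attraction distance is not an
isomorphic distance. -/
theorem distMAD_not_isomorphic :
    ∃ I I' : SRInstance 4, distMAD I I' = 0 ∧ ¬ SRIsomorphic I I' := by
  refine ⟨Iex, Iex', ?_, ?_⟩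
  · refine Nat.sInf_eq_zero.mpr (Or.inl ⟨Equiv.refl _, ?_⟩)
    decide
  · intro ⟨σ, h⟩
    revert h
    revert σ
    decide
end

section
/- An SR instance on 2n agents realizes the identity matrix ID^{2n} (defined by ID[i,j] = i if j ≥ i, and i−1 if j < i) if and only if its preferences are derived from a master list, i.e., there is a total order of the agents and each agent's preferences are obtained by deleting itself from this order. Consequently, the realization of ID^{2n} is unique up to isomorphism. -/
/-- The identity matrix `ID^{2n}`: entry `(i,j)` (1-indexed value) is `i` if
`j ≥ i` and `i - 1` if `j < i`. -/
def IDmat (n : ℕ) (i : Fin (2 * n)) (j : Fin (2 * n - 1)) : ℕ :=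
  if i.1 ≤ j.1 then i.1 + 1 else i.1

/-- `I` realizes `ID^{2n}` (for a suitable ordering of the agents as rows). -/
def RealizesID {n : ℕ} (I : SRInstance (2 * n)) : Prop :=
  ∃ ρ : Fin (2 * n) ≃ Fin (2 * n), ∀ a i, I.MA a i = IDmat n (ρ a) i

/-- The preferences of `I` are derived from a master list: there is a global
ranking `ml` of the agents such that every agent `a` ranks all other agents
according to `ml`. -/
def FromMasterList {n : ℕ} (I : SRInstance (2 * n)) : Prop :=
  ∃ ml : Fin (2 * n) ≃ Fin (2 * n), ∀ a b c : Fin (2 * n), b ≠ a → c ≠ a →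
    (I.posOf a b < I.posOf a c ↔ ml b < ml c)

section helpers
variable {N : ℕ} (I : SRInstance N)

lemma posOf_pref (a : Fin N) (i : Fin (N - 1)) : I.posOf a (I.pref a i) = i.1 + 1 := by
  have h : (Finset.univ.filter (fun j : Fin (N - 1) => I.pref a j = I.pref a i)) = {i} := by
    ext j
    simp [(I.inj a).eq_iff]
  rw [SRInstance.posOf, h, Finset.sum_singleton]

lemma exists_pref (a b : Fin N) (h : b ≠ a) : ∃ i, I.pref a i = b := by
  classical
  have hsub : Finset.univ.image (I.pref a) ⊆ Finset.univ.erase a := by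
    intro x hx
    simp only [Finset.mem_image] at hx
    obtain ⟨i, _, rfl⟩ := hx
    exact Finset.mem_erase.mpr ⟨I.ne_self a i, Finset.mem_univ _⟩
  have hcard : (Finset.univ.erase a).card ≤ (Finset.univ.image (I.pref a)).card := by
    rw [Finset.card_image_of_injective _ (I.inj a),
      Finset.card_erase_of_mem (Finset.mem_univ a)]
    simp
  have heq := Finset.eq_of_subset_of_card_le hsub hcard
  have hb : b ∈ Finset.univ.image (I.pref a) := by
    rw [heq]; exact Finset.mem_erase.mpr ⟨h, Finset.mem_univ _⟩
  simpa using hb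

lemma posOf_inj (a b c : Fin N) (hb : b ≠ a) (hc : c ≠ a)
    (h : I.posOf a b = I.posOf a c) : b = c := by
  obtain ⟨i, rfl⟩ := exists_pref I a b hb
  obtain ⟨j, rfl⟩ := exists_pref I a c hc
  rw [posOf_pref, posOf_pref] at h
  congr 1
  exact Fin.ext (by omega)

end helpers

section master
variable {N : ℕ} (I : SRInstance N) (ml : Fin N ≃ Fin N)
  (hml : ∀ a b c : Fin N, b ≠ a → c ≠ a →
    (I.posOf a b < I.posOf a c ↔ ml b < ml c))

include hml

lemma g_mono (a : Fin N) {i j : Fin (N - 1)} (hij : i.1 < j.1) :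
    (ml (I.pref a i)).1 < (ml (I.pref a j)).1 := by
  have h := (hml a _ _ (I.ne_self a i) (I.ne_self a j)).mp
  rw [posOf_pref, posOf_pref] at h
  exact h (by omega)

lemma g_ne (a : Fin N) (i : Fin (N - 1)) : (ml (I.pref a i)).1 ≠ (ml a).1 := by
  intro h
  exact I.ne_self a i (ml.injective (Fin.ext h))

lemma g_lb (a : Fin N) : ∀ (m : ℕ) (i : Fin (N - 1)), i.1 ≤ m → i.1 ≤ (ml (I.pref a i)).1 := by
  intro m
  induction m with
  | zero => intro i hi; omega
  | succ m IH =>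
    intro i hi
    by_cases h0 : i.1 = 0
    · omega
    · have hlt : i.1 - 1 < N - 1 := by omega
      have h2 := IH ⟨i.1 - 1, hlt⟩ (by simp; omega)
      have h3 := g_mono I ml hml a (i := ⟨i.1 - 1, hlt⟩) (j := i) (by simp; omega)
      simp only at h2 h3
      omega

lemma g_ub (a : Fin N) : ∀ (m : ℕ) (i : Fin (N - 1)),
    N - 1 - i.1 ≤ m → (ml (I.pref a i)).1 ≤ i.1 + 1 := by
  intro m
  induction m with
  | zero => intro i hi; have := i.isLt; omega
  | succ m IH =>
    intro i hi
    by_cases htop : i.1 = N - 2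
    · have := (ml (I.pref a i)).isLt
      have := i.isLt
      omega
    · have hlt : i.1 + 1 < N - 1 := by have := i.isLt; omega
      have h2 := IH ⟨i.1 + 1, hlt⟩ (by simp; omega)
      have h3 := g_mono I ml hml a (i := i) (j := ⟨i.1 + 1, hlt⟩) (by simp)
      simp only at h2 h3
      omega

lemma g_A (a : Fin N) : ∀ (k : ℕ) (i : Fin (N - 1)),
    i.1 + k + 1 = (ml a).1 → (ml (I.pref a i)).1 = i.1 := by
  intro k
  induction k with
  | zero =>
    intro i hi
    have hub := g_ub I ml hml a N i (by omega)
    have hlb := g_lb I ml hml a i.1 i le_rfl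
    have hne := g_ne I ml hml a i
    omega
  | succ k IH =>
    intro i hi
    have hlt : i.1 + 1 < N - 1 := by have := (ml a).isLt; have := i.isLt; omega
    have h2 := IH ⟨i.1 + 1, hlt⟩ (by simp; omega)
    have h3 := g_mono I ml hml a (i := i) (j := ⟨i.1 + 1, hlt⟩) (by simp)
    have hlb := g_lb I ml hml a i.1 i le_rfl
    simp only at h2 h3
    omega

lemma g_B (a : Fin N) : ∀ (k : ℕ) (i : Fin (N - 1)),
    i.1 = (ml a).1 + k → (ml (I.pref a i)).1 = i.1 + 1 := by
  intro k
  induction k with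
  | zero =>
    intro i hi
    have hub := g_ub I ml hml a N i (by omega)
    have hlb := g_lb I ml hml a i.1 i le_rfl
    have hne := g_ne I ml hml a i
    omega
  | succ k IH =>
    intro i hi
    have hlt : i.1 - 1 < N - 1 := by have := i.isLt; omega
    have h2 := IH ⟨i.1 - 1, hlt⟩ (by simp; omega)
    have h3 := g_mono I ml hml a (i := ⟨i.1 - 1, hlt⟩) (j := i) (by simp; omega)
    have hub := g_ub I ml hml a N i (by omega)
    simp only at h2 h3
    omega

lemma g_eq (a : Fin N) (i : Fin (N - 1)) :
    (ml (I.pref a i)).1 = if i.1 < (ml a).1 then i.1 else i.1 + 1 := by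
  split_ifs with h
  · exact g_A I ml hml a ((ml a).1 - i.1 - 1) i (by omega)
  · exact g_B I ml hml a (i.1 - (ml a).1) i (by omega)

lemma posOf_eq (a b : Fin N) (hb : b ≠ a) :
    I.posOf a b = if (ml b).1 < (ml a).1 then (ml b).1 + 1 else (ml b).1 := by
  obtain ⟨i, rfl⟩ := exists_pref I a b hb
  rw [posOf_pref]
  have h := g_eq I ml hml a i
  by_cases hi : i.1 < (ml a).1 <;> simp [hi] at h <;> split_ifs <;> omega

end master

/-- An SR instance on `2n` agents realizes `ID^{2n}` iff its preferences are
derived from a master list; consequently, the realization of `ID^{2n}` is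
unique up to isomorphism. -/
theorem realizesID_iff_masterList (n : ℕ) :
    (∀ I : SRInstance (2 * n), RealizesID I ↔ FromMasterList I) ∧
    (∀ I I' : SRInstance (2 * n), RealizesID I → RealizesID I' →
      SRIsomorphic I I') := by
  have part1 : ∀ I : SRInstance (2 * n), RealizesID I ↔ FromMasterList I := by
    intro I
    constructor
    · rintro ⟨ρ, hρ⟩
      refine ⟨ρ, fun a b c hb hc => ?_⟩
      have key : ∀ x : Fin (2 * n), x ≠ a →
          (ρ x).1 ≤ I.posOf a x ∧ I.posOf a x ≤ (ρ x).1 + 1 := by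
        intro x hx
        obtain ⟨i, hi⟩ := exists_pref I x a (fun h => hx h.symm)
        have h := hρ x i
        rw [SRInstance.MA, hi, IDmat] at h
        split_ifs at h <;> omega
      have hb' := key b hb
      have hc' := key c hc
      have hval : (ρ b < ρ c) ↔ (ρ b).1 < (ρ c).1 := Iff.rfl
      rw [hval]
      constructor
      · intro h
        rcases lt_trichotomy (ρ b).1 (ρ c).1 with h1 | h1 | h1
        · exact h1
        · have : b = c := ρ.injective (Fin.ext h1)
          subst this
          omega
        · have : I.posOf a c < I.posOf a b := by omega
          omega
      · intro h
        have hbc : b ≠ c := fun e => by subst e; omega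
        have hne : I.posOf a b ≠ I.posOf a c :=
          fun e => hbc (posOf_inj I a b c hb hc e)
        omega
    · rintro ⟨ml, hml⟩
      refine ⟨ml, fun a i => ?_⟩
      have hne : a ≠ I.pref a i := fun h => I.ne_self a i h.symm
      rw [SRInstance.MA, posOf_eq I ml hml (I.pref a i) a hne, IDmat]
      have hg := g_eq I ml hml a i
      by_cases hi : i.1 < (ml a).1 <;> simp [hi] at hg <;> split_ifs <;> omega
  refine ⟨part1, fun I I' h h' => ?_⟩
  obtain ⟨ml, hml⟩ := (part1 I).mp h
  obtain ⟨ml', hml'⟩ := (part1 I').mp h'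
  refine ⟨ml.trans ml'.symm, fun a i => ?_⟩
  apply ml'.injective
  have hrhs : ml' ((ml.trans ml'.symm) (I.pref a i)) = ml (I.pref a i) := by
    simp
  rw [hrhs]
  have h1 := g_eq I' ml' hml' ((ml.trans ml'.symm) a) i
  have h2 := g_eq I ml hml a i
  have hs : (ml' ((ml.trans ml'.symm) a)).1 = (ml a).1 := by simp
  rw [hs] at h1
  exact Fin.ext (by rw [h1, h2])
end

section
/- For every n, the mutual agreement matrix MA^{2n} (all rows equal to (1,2,…,2n−1)) is realizable, and its realizations are in bijection with colored 1-factorizations of the complete graph K_{2n} (equivalently, Round-Robin tournament schedules on 2n players). -/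
/-- `I` realizes the mutual agreement matrix `MA^{2n}` (all rows equal to
`(1, 2, …, 2n-1)`): every pair of agents rank each other in the same
position. -/
def RealizesMAmat {n : ℕ} (I : SRInstance (2 * n)) : Prop :=
  ∀ a i, I.MA a i = i.1 + 1

/-- A Round-Robin tournament schedule on `2n` players (equivalently, a colored
1-factorization of `K_{2n}`): `g j a` is the opponent of `a` on day (color)
`j`; each day's pairing is a perfect matching and each player meets each other
player exactly once. -/
def IsRoundRobin {n : ℕ} (g : Fin (2 * n - 1) → Fin (2 * n) → Fin (2 * n)) : Prop :=
  (∀ j, Function.Involutive (g j)) ∧ (∀ j a, g j a ≠ a) ∧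
    (∀ a : Fin (2 * n), Function.Injective fun j => g j a)


lemma MA_eq_iff {N : ℕ} (I : SRInstance N) (a : Fin N) (i : Fin (N - 1)) :
    I.MA a i = i.1 + 1 ↔ I.pref (I.pref a i) i = a := by
  constructor
  · intro h
    unfold SRInstance.MA SRInstance.posOf at h
    set F := Finset.univ.filter (fun j : Fin (N - 1) => I.pref (I.pref a i) j = a) with hF
    have hne : F.Nonempty := by
      by_contra h0
      rw [Finset.not_nonempty_iff_eq_empty] at h0
      rw [h0] at h; simp at h
    obtain ⟨x, hx⟩ := hne
    have hxm := hx
    rw [hF, Finset.mem_filter] at hxm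
    have hFx : F = {x} := by
      apply Finset.eq_singleton_iff_unique_mem.2
      refine ⟨hx, fun y hy => ?_⟩
      rw [hF, Finset.mem_filter] at hy
      exact I.inj _ (hy.2.trans hxm.2.symm)
    rw [hFx] at h
    simp at h
    have : x = i := Fin.ext h
    subst this; exact hxm.2
  · intro h
    unfold SRInstance.MA SRInstance.posOf
    have hs : Finset.univ.filter (fun j : Fin (N - 1) => I.pref (I.pref a i) j = a) = {i} := by
      ext j
      simp only [Finset.mem_filter, Finset.mem_univ, true_and, Finset.mem_singleton]
      constructor
      · intro hj; exact I.inj _ (hj.trans h.symm)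
      · intro hj; subst hj; exact h
    rw [hs]; simp

namespace RRAux

instance (k : ℕ) : NeZero (2 * k + 1) := ⟨by omega⟩

variable {k : ℕ}

def enc (k : ℕ) (a : Fin (2 * (k + 1))) : Option (ZMod (2 * k + 1)) :=
  if a.1 < 2 * k + 1 then some ((a.1 : ZMod (2 * k + 1))) else none

def dec (k : ℕ) (o : Option (ZMod (2 * k + 1))) : Fin (2 * (k + 1)) :=
  o.elim ⟨2 * k + 1, by omega⟩ (fun x => ⟨x.val, by have := ZMod.val_lt x; omega⟩)

def hh (k : ℕ) (c : ZMod (2 * k + 1)) (o : Option (ZMod (2 * k + 1))) :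
    Option (ZMod (2 * k + 1)) :=
  match o with
  | none => some c
  | some x => if x = c then none else some (2 * c - x)

lemma dec_enc (a : Fin (2 * (k + 1))) : dec k (enc k a) = a := by
  unfold enc dec
  by_cases h : a.1 < 2 * k + 1
  · simp only [h, if_pos]
    apply Fin.ext
    simpa using ZMod.val_cast_of_lt h
  · simp only [h, if_neg, not_false_iff]
    apply Fin.ext
    have := a.2
    simp only [Option.elim]
    omega

lemma enc_dec (o : Option (ZMod (2 * k + 1))) : enc k (dec k o) = o := by
  unfold enc dec
  cases o with
  | none => simp
  | some x =>
    have hv := ZMod.val_lt x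
    simp only [Option.elim, hv, if_pos]
    congr 1
    exact ZMod.natCast_rightInverse x

lemma dec_inj : Function.Injective (dec k) := by
  intro a b h
  rw [← enc_dec (k := k) a, ← enc_dec (k := k) b, h]

lemma two_cancel (x y : ZMod (2 * k + 1)) (h : 2 * x = 2 * y) : x = y := by
  have h1 : ((k : ZMod (2 * k + 1)) + 1) * 2 = 1 := by
    have h2 : ((2 * (k + 1) : ℕ) : ZMod (2 * k + 1)) =
        (((2 * k + 1 : ℕ) : ZMod (2 * k + 1))) + 1 := by
      push_cast; ring
    rw [ZMod.natCast_self] at h2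
    calc ((k : ZMod (2 * k + 1)) + 1) * 2
        = ((2 * (k + 1) : ℕ) : ZMod (2 * k + 1)) := by push_cast; ring
    _ = 1 := by rw [h2]; ring
  linear_combination ((k : ZMod (2 * k + 1)) + 1) * h - (x - y) * h1

lemma hh_invol (c : ZMod (2 * k + 1)) (o : Option (ZMod (2 * k + 1))) :
    hh k c (hh k c o) = o := by
  unfold hh
  cases o with
  | none => simp
  | some x =>
    by_cases h : x = c
    · simp [h]
    · simp only [h, if_neg, not_false_iff]
      have h2 : ¬ (2 * c - x = c) := by
        intro h2; apply h; linear_combination -h2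
      simp only [h2, if_neg, not_false_iff]
      congr 1; ring

lemma hh_ne (c : ZMod (2 * k + 1)) (o : Option (ZMod (2 * k + 1))) : hh k c o ≠ o := by
  unfold hh
  cases o with
  | none => simp
  | some x =>
    by_cases h : x = c
    · simp [h]
    · simp only [h, if_neg, not_false_iff, ne_eq, Option.some.injEq]
      intro h2
      apply h
      apply two_cancel
      linear_combination -h2

lemma hh_inj (o : Option (ZMod (2 * k + 1))) (c c' : ZMod (2 * k + 1))
    (h : hh k c o = hh k c' o) : c = c' := by
  unfold hh at h
  cases o with
  | none => simpa using h
  | some x =>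
    dsimp only at h
    by_cases h1 : x = c
    · by_cases h2 : x = c'
      · rw [← h1, ← h2]
      · rw [if_pos h1, if_neg h2] at h; exact absurd h (by simp)
    · by_cases h2 : x = c'
      · rw [if_neg h1, if_pos h2] at h; exact absurd h (by simp)
      · rw [if_neg h1, if_neg h2] at h
        injection h with h
        exact two_cancel _ _ (by linear_combination h)

def g (k : ℕ) (j : Fin (2 * (k + 1) - 1)) (a : Fin (2 * (k + 1))) : Fin (2 * (k + 1)) :=
  dec k (hh k ((j.1 : ZMod (2 * k + 1))) (enc k a))

lemma g_isRR : IsRoundRobin (n := k + 1) (g k) := by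
  refine ⟨?_, ?_, ?_⟩
  · intro j a
    unfold g
    rw [enc_dec, hh_invol, dec_enc]
  · intro j a h
    unfold g at h
    have := congrArg (enc k) h
    rw [enc_dec] at this
    exact hh_ne _ _ this
  · intro a j j' h
    simp only [g] at h
    have h2 := dec_inj h
    have h3 := hh_inj _ _ _ h2
    have hj : j.1 < 2 * k + 1 := by have := j.2; omega
    have hj' : j'.1 < 2 * k + 1 := by have := j'.2; omega
    apply Fin.ext
    have := congrArg ZMod.val h3
    rwa [ZMod.val_cast_of_lt hj, ZMod.val_cast_of_lt hj'] at this

end RRAux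

lemma exists_roundRobin (n : ℕ) :
    ∃ g : Fin (2 * n - 1) → Fin (2 * n) → Fin (2 * n), IsRoundRobin g := by
  cases n with
  | zero =>
    refine ⟨fun j a => a, ?_, ?_, ?_⟩
    · intro j; exact absurd j.2 (by omega)
    · intro j; exact absurd j.2 (by omega)
    · intro a; exact absurd a.2 (by omega)
  | succ k => exact ⟨RRAux.g k, RRAux.g_isRR⟩

/-- For every `n`, the mutual agreement matrix `MA^{2n}` is realizable, and
its realizations are in bijection with the Round-Robin tournament schedules on
`2n` players (colored 1-factorizations of `K_{2n}`). -/
theorem MAmat_realizations_roundRobin (n : ℕ) :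
    (∃ I : SRInstance (2 * n), RealizesMAmat I) ∧
    Nonempty ({I : SRInstance (2 * n) // RealizesMAmat I} ≃
      {g : Fin (2 * n - 1) → Fin (2 * n) → Fin (2 * n) // IsRoundRobin g}) := by
  have e : {I : SRInstance (2 * n) // RealizesMAmat I} ≃
      {g : Fin (2 * n - 1) → Fin (2 * n) → Fin (2 * n) // IsRoundRobin g} :=
    { toFun := fun I => ⟨fun j a => I.1.pref a j,
        fun j a => (MA_eq_iff I.1 a j).1 (I.2 a j),
        fun j a => I.1.ne_self a j,
        fun a => I.1.inj a⟩
      invFun := fun g => ⟨⟨fun a j => g.1 j a, fun a => g.2.2.2 a, fun a i => g.2.2.1 i a⟩,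
        fun a i => (MA_eq_iff _ a i).2 (g.2.1 i a)⟩
      left_inv := fun I => rfl
      right_inv := fun g => rfl }
  refine ⟨?_, ⟨e⟩⟩
  obtain ⟨g, hg⟩ := exists_roundRobin n
  exact ⟨(e.symm ⟨g, hg⟩).1, (e.symm ⟨g, hg⟩).2⟩
end

section
/- For every n, the mutual disagreement matrix MD^{2n} (all rows equal to (2n−1, 2n−2, …, 1)) is realized by the cyclic SR instance on agents a₁,…,a_{2n} where agent a_i's preferences are a_{i+1} ≻ a_{i+2} ≻ … ≻ a_{2n} ≻ a₁ ≻ … ≻ a_{i−1} (indices mod 2n). -/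
/-- `I` is the cyclic SR instance on agents `a₀, …, a_{2n-1}` where agent
`aᵢ`'s preferences are `a_{i+1} ≻ a_{i+2} ≻ … ` (indices mod `2n`). -/
def IsCyclicInstance {n : ℕ} (I : SRInstance (2 * n)) : Prop :=
  ∀ (a : Fin (2 * n)) (i : Fin (2 * n - 1)),
    (I.pref a i).1 = (a.1 + i.1 + 1) % (2 * n)

lemma aux_dvd_eq {m k : ℕ} (hm : 0 < m) (hk0 : 0 < k) (hk2 : k < 2 * m)
    (hd : m ∣ k) : k = m := by
  obtain ⟨t, rfl⟩ := hd
  have ht0 : t ≠ 0 := by rintro rfl; omega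
  have ht2 : t < 2 := by
    by_contra hc
    push_neg at hc
    have : m * 2 ≤ m * t := Nat.mul_le_mul_left m hc
    omega
  have : t = 1 := by omega
  subst this; omega

/-- For every `n ≥ 1`, the cyclic SR instance exists and realizes the mutual
disagreement matrix `MD^{2n}` (all rows equal to `(2n-1, 2n-2, …, 1)`). -/
theorem cyclic_realizes_MD (n : ℕ) (hn : 1 ≤ n) :
    (∃ I : SRInstance (2 * n), IsCyclicInstance I) ∧
    ∀ I : SRInstance (2 * n), IsCyclicInstance I →
      ∀ a i, I.MA a i = 2 * n - (i.1 + 1) := by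
  have hm : 0 < 2 * n := by omega
  constructor
  · refine ⟨⟨fun a i => ⟨(a.1 + i.1 + 1) % (2 * n), Nat.mod_lt _ hm⟩, ?_, ?_⟩, ?_⟩
    · intro a i j h
      have h' : (a.1 + i.1 + 1) % (2 * n) = (a.1 + j.1 + 1) % (2 * n) :=
        congrArg Fin.val h
      have h'' : (i.1 + (a.1 + 1)) % (2 * n) = (j.1 + (a.1 + 1)) % (2 * n) := by
        rw [show i.1 + (a.1 + 1) = a.1 + i.1 + 1 by ring,
            show j.1 + (a.1 + 1) = a.1 + j.1 + 1 by ring]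
        exact h'
      have hc : i.1 % (2 * n) = j.1 % (2 * n) :=
        Nat.ModEq.add_right_cancel' (a.1 + 1) h''
      have hi := i.2; have hj := j.2
      rw [Nat.mod_eq_of_lt (by omega), Nat.mod_eq_of_lt (by omega)] at hc
      exact Fin.ext hc
    · intro a i h
      have h' : (a.1 + i.1 + 1) % (2 * n) = a.1 := congrArg Fin.val h
      have h'' : (a.1 + (i.1 + 1)) % (2 * n) = a.1 % (2 * n) := by
        rw [Nat.mod_eq_of_lt a.2, show a.1 + (i.1 + 1) = a.1 + i.1 + 1 by ring]
        exact h'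
      have hc : (i.1 + 1) % (2 * n) = 0 % (2 * n) :=
        Nat.ModEq.add_left_cancel' a.1 h''
      have hi := i.2
      rw [Nat.zero_mod, Nat.mod_eq_of_lt (by omega)] at hc
      omega
    · intro a i; rfl
  · intro I hI a i
    have hi := i.2
    have hj0 : 2 * n - i.1 - 2 < 2 * n - 1 := by omega
    set j₀ : Fin (2 * n - 1) := ⟨2 * n - i.1 - 2, hj0⟩ with hj₀
    have key : ∀ j : Fin (2 * n - 1), I.pref (I.pref a i) j = a ↔ j = j₀ := by
      intro j
      have h1 := hI a i
      have h2 := hI (I.pref a i) j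
      rw [h1] at h2
      constructor
      · intro h
        have h3 : ((a.1 + i.1 + 1) % (2 * n) + j.1 + 1) % (2 * n) = a.1 := by
          rw [← h2]; exact congrArg Fin.val h
        rw [add_assoc, Nat.mod_add_mod] at h3
        have h4 : (a.1 + (i.1 + j.1 + 2)) % (2 * n) = a.1 % (2 * n) := by
          rw [Nat.mod_eq_of_lt a.2,
            show a.1 + (i.1 + j.1 + 2) = a.1 + i.1 + 1 + (j.1 + 1) by ring]
          exact h3
        have hc : (i.1 + j.1 + 2) % (2 * n) = 0 % (2 * n) :=
          Nat.ModEq.add_left_cancel' a.1 h4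
        rw [Nat.zero_mod] at hc
        have hd : 2 * n ∣ (i.1 + j.1 + 2) := Nat.dvd_of_mod_eq_zero hc
        have hj := j.2
        have := aux_dvd_eq hm (by omega) (by omega) hd
        exact Fin.ext (by simp [hj₀]; omega)
      · rintro rfl
        apply Fin.ext
        rw [h2]
        have : (a.1 + i.1 + 1) % (2 * n) + j₀.1 + 1
            = (a.1 + i.1 + 1) % (2 * n) + (2 * n - i.1 - 1) := by
          simp [hj₀]; omega
        rw [this, Nat.mod_add_mod,
          show a.1 + i.1 + 1 + (2 * n - i.1 - 1) = a.1 + 2 * n by omega,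
          Nat.add_mod_right, Nat.mod_eq_of_lt a.2]
    have hfilter : Finset.univ.filter (fun j : Fin (2 * n - 1) =>
        I.pref (I.pref a i) j = a) = {j₀} := by
      ext j; simp [key]
    rw [SRInstance.MA, SRInstance.posOf, hfilter, Finset.sum_singleton]
    simp [hj₀]; omega
end

section
/- In the bipartite Stable Marriage setting with n men and n women, the mutual agreement matrix pair (both matrices having all rows equal to (1,2,…,n)) is realizable: by Hall's theorem the complete bipartite graph K_{n,n} can be partitioned into n perfect matchings M₁,…,M_n, and defining each agent to rank at position i its partner in M_i yields an SM instance where any two agents rank each other at the same position. -/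
/-- A Stable Marriage instance with `n` men and `n` women: each man has a
strict preference order over the women (`mpref u i` is the woman ranked `i`-th
by man `u`) and each woman has a strict preference order over the men. -/
structure SMInstance (n : ℕ) where
  mpref : Fin n → Fin n → Fin n
  wpref : Fin n → Fin n → Fin n
  minj : ∀ u, Function.Injective (mpref u)
  winj : ∀ w, Function.Injective (wpref w)

/-- The (1-indexed) position of woman `w` in man `u`'s preferences. -/
def SMInstance.mposOf {n : ℕ} (I : SMInstance n) (u w : Fin n) : ℕ :=
  ∑ j ∈ Finset.univ.filter (fun j : Fin n => I.mpref u j = w), (j.1 + 1)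

/-- The (1-indexed) position of man `u` in woman `w`'s preferences. -/
def SMInstance.wposOf {n : ℕ} (I : SMInstance n) (w u : Fin n) : ℕ :=
  ∑ j ∈ Finset.univ.filter (fun j : Fin n => I.wpref w j = u), (j.1 + 1)

/-- In the Stable Marriage setting, the mutual agreement matrix pair (both
matrices having all rows equal to `(1, 2, …, n)`) is realizable: there is an
SM instance in which any two agents rank each other at the same position
(obtained by partitioning `K_{n,n}` into `n` perfect matchings via Hall's
theorem). -/
theorem SM_mutual_agreement_realizable (n : ℕ) :
    ∃ I : SMInstance n,
      (∀ u i : Fin n, I.wposOf (I.mpref u i) u = i.1 + 1) ∧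
      (∀ w i : Fin n, I.mposOf (I.wpref w i) w = i.1 + 1) := by
  cases n with
  | zero =>
      exact ⟨⟨Fin.elim0, Fin.elim0, fun u => u.elim0, fun u => u.elim0⟩,
        fun u => u.elim0, fun u => u.elim0⟩
  | succ m =>
      refine ⟨⟨fun u i => u + i, fun w i => w - i,
        fun u => add_right_injective u,
        fun w a b h => sub_right_injective h⟩, ?_, ?_⟩
      · intro u i
        have hfil : Finset.univ.filter (fun j : Fin (m + 1) => u + i - j = u) = {i} := by
          ext j
          simp only [Finset.mem_filter, Finset.mem_univ, true_and, Finset.mem_singleton,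
            sub_eq_iff_eq_add]
          constructor
          · intro h; exact (add_right_injective u h).symm
          · intro h; rw [h]
        simp [SMInstance.wposOf, hfil]
      · intro w i
        have hfil : Finset.univ.filter (fun j : Fin (m + 1) => w - i + j = w) = {i} := by
          ext j
          simp only [Finset.mem_filter, Finset.mem_univ, true_and, Finset.mem_singleton]
          constructor
          · intro h
            have h2 : j = w - (w - i) := eq_sub_of_add_eq (by rw [add_comm j (w - i)]; exact h)
            rw [h2, sub_sub_cancel]
          · intro h; rw [h, sub_add_cancel]
        simp [SMInstance.mposOf, hfil]
end
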